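/- For any three points A, B, C in the plane, there exist two distinct points P and Q such that the multiset of distances {dist(P,A), dist(P,B), dist(P,C)} equals the multiset of distances {dist(Q,A), dist(Q,B), dist(Q,C)}. -/

import Mathlib

theorem unlabelled_range_aliasing (A B C : EuclideanSpace ℝ (Fin 2)) :
    ∃ P Q : EuclideanSpace ℝ (Fin 2), P ≠ Q ∧
      ({dist P A, dist P B, dist P C} : Multiset ℝ) =
        ({dist Q A, dist Q B, dist Q C} : Multiset ℝ) := by
  classical
  set w : EuclideanSpace ℝ (Fin 2) := A + B - (2 : ℝ) • C with hw
  obtain ⟨v, hv0, hvw⟩ : ∃ v : EuclideanSpace ℝ (Fin 2), v ≠ 0 ∧ (inner ℝ v w : ℝ) = 0 := by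
    by_cases h : w = 0
    · refine ⟨EuclideanSpace.single 0 1, ?_, by simp [h]⟩
      intro hv
      have : ‖(EuclideanSpace.single 0 (1 : ℝ) : EuclideanSpace ℝ (Fin 2))‖ = 0 := by
        rw [hv, norm_zero]
      rw [EuclideanSpace.norm_single] at this
      norm_num at this
    · refine ⟨-(w 1) • EuclideanSpace.single 0 1 + (w 0) • EuclideanSpace.single 1 1, ?_, ?_⟩
      · intro hv
        apply h
        have h0 := congrArg (fun x : EuclideanSpace ℝ (Fin 2) => x 0) hv
        have h1 := congrArg (fun x : EuclideanSpace ℝ (Fin 2) => x 1) hv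
        simp [EuclideanSpace.single_apply] at h0 h1
        apply PiLp.ext
        intro i
        fin_cases i
        · exact h1
        · exact h0
      · simp [PiLp.inner_apply, Fin.sum_univ_two, EuclideanSpace.single_apply]
        ring
  set M : EuclideanSpace ℝ (Fin 2) := (2 : ℝ)⁻¹ • (A + B) with hM
  refine ⟨M + v, M - v, ?_, ?_⟩
  · intro h
    apply hv0
    have h2 : (2 : ℝ) • v = (M + v) - (M - v) := by module
    rw [h, sub_self] at h2
    simpa using (smul_eq_zero.mp h2).resolve_left (by norm_num)
  · have e1 : dist (M + v) A = dist (M - v) B := by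
      rw [dist_eq_norm, dist_eq_norm, ← norm_neg ((M - v) - B)]
      congr 1
      simp only [hM]
      module
    have e2 : dist (M + v) B = dist (M - v) A := by
      rw [dist_eq_norm, dist_eq_norm, ← norm_neg ((M - v) - A)]
      congr 1
      simp only [hM]
      module
    have e3 : dist (M + v) C = dist (M - v) C := by
      rw [dist_eq_norm, dist_eq_norm]
      have hpc : (M + v) - C = (2 : ℝ)⁻¹ • w + v := by
        simp only [hM, hw]; module
      have hqc : (M - v) - C = (2 : ℝ)⁻¹ • w - v := by
        simp only [hM, hw]; module
      rw [hpc, hqc]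
      refine (norm_sub_eq_norm_add (𝕜 := ℝ) ?_).symm
      rw [real_inner_smul_right, hvw, mul_zero]
    rw [e1, e2, e3]
    exact Multiset.cons_swap _ _ _
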